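/- Let m be an odd positive integer and let ℓ_m be the minimal degree of the irreducible factors in (Z/2)[X] of (X^m − 1)/(X − 1). Then every nonzero ideal of R_m contained in J_m has dimension over Z/2 at least ℓ_m. -/

import Mathlib

open Polynomial

noncomputable section

/-- The polynomial `X^m - 1` over `Z/2`. -/
def fm (m : ℕ) : Polynomial (ZMod 2) := X ^ m - 1

/-- The polynomial `X^m - 1` over `Z/4`. -/
def fm4 (m : ℕ) : Polynomial (ZMod 4) := X ^ m - 1

/-- `R_m = (Z/2)[X]/⟨X^m - 1⟩`. -/
abbrev R2 (m : ℕ) : Type := Polynomial (ZMod 2) ⧸ Ideal.span {fm m}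

/-- `R'_m = (Z/4)[X]/⟨X^m - 1⟩`. -/
abbrev R4 (m : ℕ) : Type := Polynomial (ZMod 4) ⧸ Ideal.span {fm4 m}

def mk2 (m : ℕ) : Polynomial (ZMod 2) →+* R2 m := Ideal.Quotient.mk _

def mk4 (m : ℕ) : Polynomial (ZMod 4) →+* R4 m := Ideal.Quotient.mk _

/-- The canonical representative (of degree `< m`) of an element of `R2 m`. -/
def rep2 (m : ℕ) (r : R2 m) : Polynomial (ZMod 2) :=
  (Function.surjInv (Ideal.Quotient.mk_surjective (I := Ideal.span {fm m})) r) %ₘ fm m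

/-- The canonical representative (of degree `< m`) of an element of `R4 m`. -/
def rep4 (m : ℕ) (r : R4 m) : Polynomial (ZMod 4) :=
  (Function.surjInv (Ideal.Quotient.mk_surjective (I := Ideal.span {fm4 m})) r) %ₘ fm4 m

/-- Coefficientwise doubling map `(Z/2)[X] → (Z/4)[X]`, `a ↦ 2a` on each coefficient. -/
def polyDbl (p : Polynomial (ZMod 2)) : Polynomial (ZMod 4) :=
  ∑ i ∈ p.support, Polynomial.C (2 * ((p.coeff i).val : ZMod 4)) * X ^ i

/-- The additive embedding `R_m → R'_m`, `f ↦ 2f`. -/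
def iota (m : ℕ) (r : R2 m) : R4 m := mk4 m (polyDbl (rep2 m r))

/-- Hamming weight of an element of `R_m` (of its coefficient vector). -/
def wt2 (m : ℕ) (r : R2 m) : ℕ := (rep2 m r).support.card

/-- Lee weight of an element of `Z/4`. -/
def lee (x : ZMod 4) : ℕ := min x.val (4 - x.val)

/-- Lee weight of an element of `R'_m` (of its coefficient vector). -/
def wtLee (m : ℕ) (r : R4 m) : ℕ := ∑ i ∈ (rep4 m r).support, lee ((rep4 m r).coeff i)

/-- The augmentation ideal `J_m = ⟨X - 1⟩` of `R_m`. -/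
def Jm (m : ℕ) : Ideal (R2 m) := Ideal.span {mk2 m (X - 1)}

/-- The `Z2Z4`-additive cyclic code `C_{a,b} = {(f·a, 2(f·b)) : f ∈ R_m}`. -/
def Cab (m : ℕ) (a b : R2 m) : Set (R2 m × R4 m) :=
  {w | ∃ f : R2 m, w = (f * a, iota m (f * b))}

/-- Dimension of `C_{a,b}` as a vector space over `Z/2`, i.e. `log₂ |C_{a,b}|`. -/
def dimCab (m : ℕ) (a b : R2 m) : ℕ := Nat.log 2 (Nat.card (Cab m a b))

/-- `(X^m - 1)/(X - 1) = X^{m-1} + ⋯ + X + 1` over `Z/2`. -/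
def geomPoly (m : ℕ) : Polynomial (ZMod 2) := ∑ i ∈ Finset.range m, X ^ i

/-- `ℓ_m`: minimal degree of the irreducible factors of `(X^m-1)/(X-1)` in `(Z/2)[X]`. -/
def ell (m : ℕ) : ℕ :=
  sInf {d | ∃ p : Polynomial (ZMod 2), Irreducible p ∧ p ∣ geomPoly m ∧ p.natDegree = d}

/-- The binary entropy function `H(x) = -x·log₂x - (1-x)·log₂(1-x)`. -/
def Hent (x : ℝ) : ℝ := -(x * Real.logb 2 x) - (1 - x) * Real.logb 2 (1 - x)

-- auxiliary lemmas
lemma fm_monic {m : ℕ} (hmpos : 0 < m) : (fm m).Monic := by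
  simpa [fm] using monic_X_pow_sub_C (1 : ZMod 2) hmpos.ne'

lemma fm_natDegree {m : ℕ} (hmpos : 0 < m) : (fm m).natDegree = m := by
  simpa [fm] using natDegree_X_pow_sub_C (n := m) (r := (1 : ZMod 2))

lemma fm_factor (m : ℕ) : geomPoly m * (X - 1) = fm m := geom_sum_mul X m

set_option maxHeartbeats 1000000 in
set_option synthInstance.maxHeartbeats 200000 in
/-- Every nonzero ideal of `R_m` contained in `J_m` has `Z/2`-dimension
at least `ℓ_m`. -/
theorem statement4 (m : ℕ) (hm : Odd m) (hmpos : 0 < m)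
    (I : Ideal (R2 m)) (hI : I ≤ Jm m) (hI0 : I ≠ ⊥) :
    ell m ≤ Module.finrank (ZMod 2) I := by
  classical
  have hmonic : (fm m).Monic := fm_monic hmpos
  have hfm0 : fm m ≠ 0 := hmonic.ne_zero
  set mk : Polynomial (ZMod 2) →+* R2 m := Ideal.Quotient.mk (Ideal.span {fm m}) with hmkdef
  -- a nonzero element of I
  obtain ⟨r, hrI, hr0⟩ := Submodule.exists_mem_ne_zero_of_ne_bot hI0
  obtain ⟨f₀, hf₀⟩ := Ideal.Quotient.mk_surjective r
  set f := f₀ %ₘ fm m with hfdef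
  have hmkf : mk f = r := by
    rw [← hf₀]
    refine Ideal.Quotient.eq.mpr ?_
    rw [hfdef, modByMonic_eq_sub_mul_div _ (fm m)]
    rw [Ideal.mem_span_singleton]
    exact ⟨-(f₀ /ₘ fm m), by ring⟩
  have hf0 : f ≠ 0 := by
    intro h
    apply hr0
    rw [← hmkf, h, map_zero]
  have hdegf : f.natDegree < m := by
    have h1 : f.degree < (fm m).degree := by
      rw [hfdef]; exact degree_modByMonic_lt f₀ hmonic
    have h2 := natDegree_lt_natDegree hf0 h1
    rwa [fm_natDegree hmpos] at h2
  -- gcd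
  set g := EuclideanDomain.gcd f (fm m) with hgdef
  have hgf : g ∣ f := EuclideanDomain.gcd_dvd_left _ _
  have hgfm : g ∣ fm m := EuclideanDomain.gcd_dvd_right _ _
  have hg0 : g ≠ 0 := by
    intro h
    rw [hgdef, EuclideanDomain.gcd_eq_zero_iff] at h
    exact hf0 h.1
  -- X - 1 divides f
  have hX1fm : (X - 1 : Polynomial (ZMod 2)) ∣ fm m := Dvd.intro_left _ (fm_factor m)
  have hX10 : (X - 1 : Polynomial (ZMod 2)) ≠ 0 := by
    have := Polynomial.X_sub_C_ne_zero (1 : ZMod 2)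
    simpa using this
  have hX1f : (X - 1 : Polynomial (ZMod 2)) ∣ f := by
    have hrJ : r ∈ Jm m := hI hrI
    rw [Jm, Ideal.mem_span_singleton] at hrJ
    obtain ⟨c, hc⟩ := hrJ
    obtain ⟨z, hz⟩ := Ideal.Quotient.mk_surjective c
    have hfe : mk f = mk ((X - 1) * z) := by
      rw [hmkf, hc, ← hz]
      rfl
    have := Ideal.Quotient.eq.mp hfe
    rw [Ideal.mem_span_singleton] at this
    obtain ⟨w, hw⟩ := this
    have : f = (X - 1) * z + fm m * w := by linear_combination hw
    rw [this]
    exact dvd_add (Dvd.intro _ rfl) (Dvd.dvd.mul_right hX1fm w)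
  have hX1g : (X - 1 : Polynomial (ZMod 2)) ∣ g := EuclideanDomain.dvd_gcd hX1f hX1fm
  -- complement factor h
  obtain ⟨h, hh⟩ := hgfm
  have hh0 : h ≠ 0 := by
    intro h0
    rw [h0, mul_zero] at hh
    exact hfm0 hh
  have hhu : ¬IsUnit h := by
    intro hu
    have hdg : g.natDegree ≤ f.natDegree := natDegree_le_of_dvd hgf hf0
    have : (fm m).natDegree = g.natDegree + h.natDegree := by
      rw [hh, natDegree_mul hg0 hh0]
    rw [fm_natDegree hmpos, natDegree_eq_zero_of_isUnit hu, add_zero] at this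
    omega
  obtain ⟨p, hpirr, hpdvdh⟩ := WfDvdMonoid.exists_irreducible_factor hhu hh0
  have hp0 : p ≠ 0 := hpirr.ne_zero
  -- p divides geomPoly m
  obtain ⟨g', hg'⟩ := hX1g
  have hgeom : geomPoly m = g' * h := by
    apply mul_right_cancel₀ hX10
    rw [fm_factor m, hh, hg']
    ring
  have hpgeom : p ∣ geomPoly m := by
    rw [hgeom]
    exact Dvd.dvd.mul_left hpdvdh g'
  have hell : ell m ≤ p.natDegree := Nat.sInf_le ⟨p, hpirr, hpgeom, rfl⟩
  refine hell.trans ?_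
  -- the complementary factor q of p
  have hpfm : p ∣ fm m := hpdvdh.trans (Dvd.intro_left g hh.symm)
  obtain ⟨q, hq⟩ := hpfm
  have hq0 : q ≠ 0 := by
    intro h0
    rw [h0, mul_zero] at hq
    exact hfm0 hq
  -- g divides q
  obtain ⟨h', hh'⟩ := hpdvdh
  have hqgh' : q = g * h' := by
    apply mul_left_cancel₀ hp0
    rw [← hq, hh, hh']
    ring
  -- mk q ∈ I
  have hgI : mk g ∈ I := by
    have hbez := EuclideanDomain.gcd_eq_gcd_ab f (fm m)
    have : mk g = r * mk (EuclideanDomain.gcdA f (fm m)) := by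
      rw [← hmkf, ← map_mul]
      rw [hgdef, hbez]
      have : mk (fm m) = 0 :=
        Ideal.Quotient.eq_zero_iff_mem.mpr (Ideal.mem_span_singleton_self _)
      rw [map_add, map_mul, map_mul (f := mk), this, zero_mul, add_zero]
    rw [this]
    exact Ideal.mul_mem_right _ I hrI
  have hqI : mk q ∈ I := by
    rw [hqgh', map_mul]
    exact Ideal.mul_mem_right _ I hgI
  -- linear independent family
  set d := p.natDegree with hddef
  have hmem : ∀ i : Fin d, mk (X ^ (i : ℕ) * q) ∈ I := by
    intro i
    rw [map_mul]
    exact Ideal.mul_mem_left I _ hqI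
  set v : Fin d → I := fun i => ⟨mk (X ^ (i : ℕ) * q), hmem i⟩ with hvdef
  have hli : LinearIndependent (ZMod 2) v := by
    rw [Fintype.linearIndependent_iff]
    intro c hc
    set z : Polynomial (ZMod 2) := ∑ i : Fin d, C (c i) * X ^ (i : ℕ) with hzdef
    have hsum : mk (z * q) = 0 := by
      have hc' : (∑ i : Fin d, c i • mk (X ^ (i : ℕ) * q)) = 0 := by
        have := congrArg (Subtype.val) hc
        simpa [hvdef] using this
      calc mk (z * q) = ∑ i : Fin d, mk (c i • (X ^ (i : ℕ) * q)) := by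
            rw [← map_sum]
            congr 1
            rw [hzdef, Finset.sum_mul]
            refine Finset.sum_congr rfl fun i _ => ?_
            rw [smul_eq_C_mul, mul_assoc]
        _ = ∑ i : Fin d, c i • mk (X ^ (i : ℕ) * q) := by
            refine Finset.sum_congr rfl fun i _ => ?_
            exact Submodule.Quotient.mk_smul _ (c i) _
        _ = 0 := hc'
    have hdvd : fm m ∣ z * q := by
      rw [← Ideal.mem_span_singleton]
      exact Ideal.Quotient.eq_zero_iff_mem.mp hsum
    have hpz : p ∣ z := by
      rw [hq] at hdvd
      have : p * q ∣ z * q := hdvd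
      exact (mul_dvd_mul_iff_right hq0).mp this
    have hz0 : z = 0 := by
      refine eq_zero_of_dvd_of_degree_lt hpz ?_
      have h1 : z.degree < (d : WithBot ℕ) := degree_sum_fin_lt c
      rwa [degree_eq_natDegree hp0]
    intro i
    have := congrArg (fun w => Polynomial.coeff w (i : ℕ)) hz0
    simpa [hzdef, finset_sum_coeff, coeff_C_mul, coeff_X_pow, Fin.val_eq_val] using this
  -- conclude
  haveI : Module.Finite (ZMod 2) (R2 m) :=
    Module.Finite.of_basis (AdjoinRoot.powerBasis' hmonic).basis
  have hcard := hli.fintype_card_le_finrank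
  simpa using hcard

end
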